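/- In the canonical game G(X): for any ω, ω' ∈ Ω and any formula φ, if Nφ ∈ ω then φ ∈ ω'. -/
import Mathlib


/-- Formulae of the language Φ: propositional variables, negation, implication,
the necessity modality `N` (`nec`), and the attacker's blameworthiness modality `A` (`blame`). -/
inductive Formula : Type
  | var : ℕ → Formula
  | neg : Formula → Formula
  | imp : Formula → Formula → Formula
  | nec : Formula → Formula
  | blame : Formula → Formula

namespace Formula

/-- Conjunction, defined through `→` and `¬` in the standard way. -/
def conj (φ ψ : Formula) : Formula := neg (imp φ (neg ψ))

/-- Disjunction, defined through `→` and `¬` in the standard way. -/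
def disj (φ ψ : Formula) : Formula := imp (neg φ) ψ

/-- Biconditional, defined through `→` and `¬` in the standard way. -/
def biimp (φ ψ : Formula) : Formula := conj (imp φ ψ) (imp ψ φ)

/-- `R φ` is an abbreviation for `¬(φ → A φ)`. -/
def R (φ : Formula) : Formula := neg (imp φ (blame φ))

end Formula

/-- A formula is a propositional tautology if it evaluates to true under every
truth assignment that respects `¬` and `→` (treating all other formulae as atoms). -/
def IsTaut (φ : Formula) : Prop :=
  ∀ v : Formula → Bool,
    (∀ ψ, v ψ.neg = !(v ψ)) →
    (∀ ψ χ, v (ψ.imp χ) = (!(v ψ) || v χ)) →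
    v φ = true

/-- Provability `⊢ φ` in the logical system for blameworthiness in security games. -/
inductive Prov : Formula → Prop
  | taut {φ} : IsTaut φ → Prov φ
  | truthN (φ : Formula) : Prov ((φ.nec).imp φ)
  | truthA (φ : Formula) : Prov ((φ.blame).imp φ)
  | negIntro (φ : Formula) : Prov (((φ.nec).neg).imp (((φ.nec).neg).nec))
  | distrib (φ ψ : Formula) : Prov (((φ.imp ψ).nec).imp ((φ.nec).imp (ψ.nec)))
  | unavoid (φ : Formula) : Prov ((φ.nec).imp ((φ.blame).neg))
  | strictCond (φ ψ : Formula) : Prov (((φ.imp ψ).nec).imp ((ψ.blame).imp (φ.imp (φ.blame))))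
  | conjAx (φ ψ : Formula) : Prov (((φ.conj ψ).blame).imp ((φ.blame).disj (ψ.blame)))
  | noBlame (φ : Formula) : Prov (((φ.imp (φ.blame)).blame).neg)
  | mp {φ ψ} : Prov (φ.imp ψ) → Prov φ → Prov ψ
  | necRule {φ} : Prov φ → Prov (φ.nec)

/-- `X ⊢ φ`: provability from the theorems of the logical system together with
additional hypotheses `X`, using only the Modus Ponens rule. -/
inductive ProvFrom (X : Set Formula) : Formula → Prop
  | hyp {φ} : φ ∈ X → ProvFrom X φ
  | thm {φ} : Prov φ → ProvFrom X φ
  | mp {φ ψ} : ProvFrom X (φ.imp ψ) → ProvFrom X φ → ProvFrom X ψ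

/-- A set of formulae is consistent if no contradiction is derivable from it. -/
def Consistent (X : Set Formula) : Prop := ¬ ∃ φ, ProvFrom X φ ∧ ProvFrom X φ.neg

/-- A maximal consistent set of formulae. -/
def MaxConsistent (X : Set Formula) : Prop :=
  Consistent X ∧ ∀ Y, X ⊆ Y → Consistent Y → Y = X

/-- A security game: a set `D` of actions of the defender; for each `d ∈ D` a
nonempty set `A d` of actions of the attacker in response to `d`; and a valuation
assigning to each propositional variable a set of action profiles `(d, a)`. -/
structure SecurityGame where
  D : Type
  A : D → Type
  nonempty : ∀ d, Nonempty (A d)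
  val : ℕ → ∀ d : D, A d → Prop

/-- The satisfaction relation `(d, a) ⊨ φ` of a security game. -/
def Sat (G : SecurityGame) : Formula → ∀ d : G.D, G.A d → Prop
  | .var p, d, a => G.val p d a
  | .neg φ, d, a => ¬ Sat G φ d a
  | .imp φ ψ, d, a => Sat G φ d a → Sat G ψ d a
  | .nec φ, _, _ => ∀ (d' : G.D) (a' : G.A d'), Sat G φ d' a'
  | .blame φ, d, a => Sat G φ d a ∧ ∃ a' : G.A d, ¬ Sat G φ d a'

/-- The set Ω of the canonical game `G(X)`: all maximal consistent sets of formulae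
containing `{φ | N φ ∈ X}`. -/
def canonicalOmega (X : Set Formula) : Set (Set Formula) :=
  {ω | MaxConsistent ω ∧ ∀ φ, φ.nec ∈ X → φ ∈ ω}

/-- The indistinguishability relation `ω ∼ ω'` of the canonical game. -/
def simRel (ω ω' : Set Formula) : Prop := ∀ φ : Formula, φ.R ∈ ω ↔ φ.R ∈ ω'

/-- The `∼`-equivalence class `[δ]` of `δ` inside Ω. -/
def eqClass (X : Set Formula) (δ : Set Formula) : Set (Set Formula) :=
  {ω ∈ canonicalOmega X | simRel δ ω}

/-- The canonical security game `G(X)`. -/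
def canonicalGame (X : Set Formula) : SecurityGame where
  D := canonicalOmega X
  A := fun δ => {ω : canonicalOmega X // simRel δ.val ω.val}
  nonempty := fun δ => ⟨⟨δ, fun _ => Iff.rfl⟩⟩
  val := fun p _ a => Formula.var p ∈ a.val.val


lemma taut_id (φ : Formula) : IsTaut (φ.imp φ) := by
  intro v hn hi; simp [hi]

lemma taut_k1 (φ ψ : Formula) : IsTaut (ψ.imp (φ.imp ψ)) := by
  intro v hn hi; cases hvψ : v ψ <;> cases hvφ : v φ <;> simp [hi, hvψ, hvφ]

lemma taut_k2 (φ χ ψ : Formula) :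
    IsTaut ((φ.imp (χ.imp ψ)).imp ((φ.imp χ).imp (φ.imp ψ))) := by
  intro v hn hi
  cases hvψ : v ψ <;> cases hvφ : v φ <;> cases hvχ : v χ <;> simp [hi, hvψ, hvφ, hvχ]

lemma taut_neg (φ ψ : Formula) :
    IsTaut ((φ.imp ψ).imp ((φ.imp ψ.neg).imp φ.neg)) := by
  intro v hn hi
  cases hvψ : v ψ <;> cases hvφ : v φ <;> simp [hi, hn, hvψ, hvφ]

lemma provFrom_cut {X : Set Formula} {φ ψ : Formula}
    (h : ProvFrom (insert φ X) ψ) (hφ : ProvFrom X φ) : ProvFrom X ψ := by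
  induction h with
  | hyp h =>
    rcases h with rfl | h
    · exact hφ
    · exact .hyp h
  | thm h => exact .thm h
  | mp _ _ ih1 ih2 => exact .mp ih1 ih2

lemma deduction {X : Set Formula} {φ ψ : Formula}
    (h : ProvFrom (insert φ X) ψ) : ProvFrom X (φ.imp ψ) := by
  induction h with
  | hyp h =>
    rcases h with rfl | h
    · exact .thm (.taut (taut_id _))
    · exact .mp (.thm (.taut (taut_k1 _ _))) (.hyp h)
  | thm h => exact .mp (.thm (.taut (taut_k1 _ _))) (.thm h)
  | mp _ _ ih1 ih2 => exact .mp (.mp (.thm (.taut (taut_k2 _ _ _))) ih1) ih2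

lemma mcs_mem {X : Set Formula} {φ : Formula}
    (hX : MaxConsistent X) (h : ProvFrom X φ) : φ ∈ X := by
  have hc : Consistent (insert φ X) := by
    rintro ⟨ψ, h1, h2⟩
    exact hX.1 ⟨ψ, provFrom_cut h1 h, provFrom_cut h2 h⟩
  have := hX.2 (insert φ X) (Set.subset_insert _ _) hc
  rw [← this]; exact Set.mem_insert _ _

lemma mcs_neg {X : Set Formula} {φ : Formula}
    (hX : MaxConsistent X) (h : φ ∉ X) : φ.neg ∈ X := by
  have hinc : ¬ Consistent (insert φ X) := fun hc =>
    h (by rw [← hX.2 _ (Set.subset_insert _ _) hc]; exact Set.mem_insert _ _)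
  rw [Consistent, not_not] at hinc
  obtain ⟨ψ, h1, h2⟩ := hinc
  exact mcs_mem hX (.mp (.mp (.thm (.taut (taut_neg φ ψ))) (deduction h1)) (deduction h2))

/-- In the canonical game `G(X)`: for any `ω, ω' ∈ Ω` and any formula `φ`,
if `N φ ∈ ω` then `φ ∈ ω'`. -/
theorem nec_member_canonical (X : Set Formula) (hX : MaxConsistent X)
    (ω : Set Formula) (hω : ω ∈ canonicalOmega X)
    (ω' : Set Formula) (hω' : ω' ∈ canonicalOmega X)
    (φ : Formula) (h : φ.nec ∈ ω) :
    φ ∈ ω' := by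
  apply hω'.2
  by_contra hnX
  have h1 : (φ.nec).neg ∈ X := mcs_neg hX hnX
  have h2 : ((φ.nec).neg).nec ∈ X :=
    mcs_mem hX (.mp (.thm (.negIntro φ)) (.hyp h1))
  have h3 : (φ.nec).neg ∈ ω := hω.2 _ h2
  exact hω.1.1 ⟨φ.nec, .hyp h, .hyp h3⟩
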